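/- Let x be a complex number with |x| = 1 and let a, b, c be pairwise distinct integers. If the matrix with rows (1,1,1), (a,b,c), (x^a, x^b, x^c) is degenerate (determinant zero), then x^a = x^b = x^c, i.e., the first and third rows are proportional (in fact equal up to a common scalar x^a). -/

import Mathlib

open Matrix

theorem stmt_1 (x : ℂ) (hx : ‖x‖ = 1) (a b c : ℤ)
    (hab : a ≠ b) (hbc : b ≠ c) (hac : a ≠ c)
    (hdet : (!![1, 1, 1; (a : ℂ), (b : ℂ), (c : ℂ); x ^ a, x ^ b, x ^ c]).det = 0) :
    x ^ a = x ^ b ∧ x ^ b = x ^ c := by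
  simp [Matrix.det_fin_three] at hdet
  have hx0 : x ≠ 0 := by
    intro h; simp [h] at hx
  have hA0 : x ^ a ≠ 0 := zpow_ne_zero _ hx0
  have hB0 : x ^ b ≠ 0 := zpow_ne_zero _ hx0
  have hC0 : x ^ c ≠ 0 := zpow_ne_zero _ hx0
  have hcx : (starRingEnd ℂ) x = x⁻¹ := (Complex.inv_eq_conj hx).symm
  have hconj : ∀ n : ℤ, (starRingEnd ℂ) (x ^ n) = (x ^ n)⁻¹ := by
    intro n
    rw [map_zpow₀, hcx, _root_.inv_zpow]
  have hdet2 : (b : ℂ) * (x ^ c)⁻¹ - c * (x ^ b)⁻¹ - a * (x ^ c)⁻¹ + c * (x ^ a)⁻¹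
      + a * (x ^ b)⁻¹ - b * (x ^ a)⁻¹ = 0 := by
    have h := congrArg (starRingEnd ℂ) hdet
    simpa only [map_sub, map_add, _root_.map_mul, map_zero, map_intCast, hconj] using h
  have E2 : (b : ℂ) * (x ^ a * x ^ b) - c * (x ^ a * x ^ c) - a * (x ^ a * x ^ b)
      + c * (x ^ b * x ^ c) + a * (x ^ a * x ^ c) - b * (x ^ b * x ^ c) = 0 := by
    have hA : (x ^ a)⁻¹ * x ^ a = 1 := inv_mul_cancel₀ hA0
    have hB : (x ^ b)⁻¹ * x ^ b = 1 := inv_mul_cancel₀ hB0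
    have hC : (x ^ c)⁻¹ * x ^ c = 1 := inv_mul_cancel₀ hC0
    linear_combination (x ^ a * x ^ b * x ^ c) * hdet2
      - ((b : ℂ) - a) * (x ^ a * x ^ b) * hC
      - ((a : ℂ) - c) * (x ^ a * x ^ c) * hB
      - ((c : ℂ) - b) * (x ^ b * x ^ c) * hA
  have hab' : (a : ℂ) - b ≠ 0 := sub_ne_zero.mpr (by exact_mod_cast hab)
  have hbc' : (b : ℂ) - c ≠ 0 := sub_ne_zero.mpr (by exact_mod_cast hbc)
  have hac' : (a : ℂ) - c ≠ 0 := sub_ne_zero.mpr (by exact_mod_cast hac)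
  have key : ((a : ℂ) - b) * (x ^ a - x ^ c) * (x ^ b - x ^ c) = 0 := by
    linear_combination (-(x ^ c)) * hdet - E2
  rcases mul_eq_zero.mp key with h | hBC
  · rcases mul_eq_zero.mp h with h | hAC
    · exact absurd h hab'
    · have hAC' : x ^ a = x ^ c := sub_eq_zero.mp hAC
      have h2 : ((a : ℂ) - c) * (x ^ b - x ^ c) = 0 := by
        linear_combination hdet - ((c : ℂ) - b) * hAC
      have hBC' : x ^ b = x ^ c := sub_eq_zero.mp
        ((mul_eq_zero.mp h2).resolve_left hac')
      exact ⟨hAC'.trans hBC'.symm, hBC'⟩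
  · have hBC' : x ^ b = x ^ c := sub_eq_zero.mp hBC
    have h2 : ((b : ℂ) - c) * (x ^ a - x ^ c) = 0 := by
      linear_combination -hdet + ((a : ℂ) - c) * hBC
    have hAC' : x ^ a = x ^ c := sub_eq_zero.mp
      ((mul_eq_zero.mp h2).resolve_left hbc')
    exact ⟨hAC'.trans hBC'.symm, hBC'⟩
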